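/- Let M be an m×m matrix over a commutative ring and suppose there exist indices i ≠ j such that the i-th and j-th rows of M are equal and the i-th and j-th columns of M are equal. Then s(adj(M)) = 0. -/

import Mathlib

open Matrix

/-- The sum of all entries of a square matrix. -/
def matS {ι R : Type*} [Fintype ι] [CommRing R] (M : Matrix ι ι R) : R :=
  ∑ i, ∑ j, M i j

theorem stmt7 {R : Type*} [CommRing R] (m : ℕ) (M : Matrix (Fin m) (Fin m) R)
    (i j : Fin m) (hij : i ≠ j)
    (hrow : ∀ k, M i k = M j k) (hcol : ∀ k, M k i = M k j) :
    matS M.adjugate = 0 := by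
  unfold matS
  erw [Finset.sum_comm]
  refine Finset.sum_eq_zero fun l _ => ?_
  have h1 : ∀ k, M.adjugate k l = cramer Mᵀ (Pi.single k 1) l := by
    intro k
    rw [adjugate_def]
    rfl
  simp only [h1]
  have h2 : (∑ k, cramer Mᵀ (Pi.single k 1) l) = cramer Mᵀ (∑ k, Pi.single k (1:R)) l := by
    rw [map_sum]
    simp [Finset.sum_apply]
  rw [h2]
  have h3 : (∑ k : Fin m, Pi.single k (1:R) : Fin m → R) = fun _ => 1 := by
    funext x
    simp [Finset.sum_apply, Pi.single_apply]
  rw [h3, cramer_apply]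
  apply det_zero_of_row_eq hij
  funext c
  by_cases hc : c = l <;> simp [updateCol_apply, hc, hcol c]
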